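/- (Cells of large sign patterns are small in random matrices.) Fix ε > 0. There exists a constant C₁ = C₁(ε) > 0 such that, for A drawn uniformly at random from total sign matrices {−1,1}^{N×N}, the probability of the following event tends to 0 as N → ∞: there exist a set T ⊆ Fin N of rows with |T| ≥ (1+ε)·log₂ N and a sign assignment s : T → {−1,1} such that the cell C(T,s) := {j ∈ Fin N : ∀ i ∈ T, A i j = s i} has |C(T,s)| > C₁·log₂ N. -/

import Mathlib

open Finset MeasureTheory Filter Real
open scoped ENNReal

/-- Patching equivalence: a matrix is determined by its "corrected" version (where
columns in `S'` are forced to agree with column `j₀` on rows in `T`) together with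
the original values on `T ×ˢ S'`. -/
def patchEquiv {N : ℕ} (T S' : Finset (Fin N)) (j₀ : Fin N) (hj₀ : j₀ ∉ S') :
    {A : Fin N → Fin N → Bool // ∀ j ∈ S', ∀ i ∈ T, A i j = A i j₀} ×
      (↥(T ×ˢ S') → Bool) ≃ (Fin N → Fin N → Bool) where
  toFun := fun x i j => if h : (i, j) ∈ T ×ˢ S' then x.2 ⟨(i, j), h⟩ else x.1.1 i j
  invFun := fun A =>
    (⟨fun i j => if (i, j) ∈ T ×ˢ S' then A i j₀ else A i j, by
        intro j hj i hi
        have h1 : (i, j) ∈ T ×ˢ S' := Finset.mem_product.2 ⟨hi, hj⟩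
        have h2 : (i, j₀) ∉ T ×ˢ S' := by
          simp only [Finset.mem_product]
          exact fun h => hj₀ h.2
        simp [h1, h2]⟩,
      fun p => A p.1.1 p.1.2)
  left_inv := by
    rintro ⟨⟨B, hB⟩, v⟩
    refine Prod.ext (Subtype.ext ?_) ?_
    · funext i j
      by_cases h : (i, j) ∈ T ×ˢ S'
      · have h2 : (i, j₀) ∉ T ×ˢ S' := by
          simp only [Finset.mem_product]
          exact fun h' => hj₀ h'.2
        simp only [h, if_pos, dif_neg h2]
        exact (hB j (Finset.mem_product.1 h).2 i (Finset.mem_product.1 h).1).symm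
      · simp [h]
    · funext p
      simp [p.2]
  right_inv := by
    intro A
    funext i j
    by_cases h : (i, j) ∈ T ×ˢ S'
    · simp [h]
    · simp [h]

lemma cell_measure {N : ℕ} (T S' : Finset (Fin N)) (j₀ : Fin N) (hj₀ : j₀ ∉ S') :
    (PMF.uniformOfFintype (Fin N → Fin N → Bool)).toMeasure
      {A | ∀ j ∈ S', ∀ i ∈ T, A i j = A i j₀} =
      ((2 : ℝ≥0∞) ^ (T.card * S'.card))⁻¹ := by
  classical
  rw [PMF.toMeasure_uniformOfFintype_apply _ .of_discrete]
  have hcard := Fintype.card_congr (patchEquiv T S' j₀ hj₀)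
  rw [Fintype.card_prod, Fintype.card_fun, Fintype.card_coe, Finset.card_product,
    Fintype.card_bool] at hcard
  simp only [Fintype.card_eq_nat_card] at hcard ⊢
  set a : ℕ := Nat.card {A : Fin N → Fin N → Bool // ∀ j ∈ S', ∀ i ∈ T, A i j = A i j₀} with ha_def
  have hset : Nat.card ↥{A : Fin N → Fin N → Bool | ∀ j ∈ S', ∀ i ∈ T, A i j = A i j₀} = a :=
    Nat.card_congr (Equiv.subtypeEquivRight fun _ => Iff.rfl)
  rw [hset, ← hcard]
  have ha : 0 < a := by
    rw [ha_def, Nat.card_eq_fintype_card]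
    exact Fintype.card_pos_iff.2 ⟨⟨fun _ _ => true, fun _ _ _ _ => rfl⟩⟩
  have ha0 : (a : ℝ≥0∞) ≠ 0 := by exact_mod_cast ha.ne'
  have haT : (a : ℝ≥0∞) ≠ ⊤ := ENNReal.natCast_ne_top a
  have h20 : ((2 : ℝ≥0∞) ^ (T.card * S'.card)) ≠ 0 := by positivity
  have h2T : ((2 : ℝ≥0∞) ^ (T.card * S'.card)) ≠ ⊤ := by
    exact ENNReal.pow_ne_top (by norm_num)
  push_cast
  rw [div_eq_mul_inv, ENNReal.mul_inv (Or.inl ha0) (Or.inl haT), ← mul_assoc,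
    ENNReal.mul_inv_cancel ha0 haT, one_mul]

open Real in
lemma event_measure_le (ε C₁ : ℝ) (hε : 0 < ε) (hC₁ : 0 ≤ C₁) (N : ℕ) (hN : 1 ≤ N) :
    (PMF.uniformOfFintype (Fin N → Fin N → Bool)).toMeasure
      {A | ∃ (T : Finset (Fin N)) (s : Fin N → Bool),
        (1 + ε) * Real.logb 2 N ≤ (T.card : ℝ) ∧
        C₁ * Real.logb 2 N <
          ((Finset.univ.filter fun j => ∀ i ∈ T, A i j = s i).card : ℝ)} ≤
    (N : ℝ≥0∞) ^ (⌈(1+ε) * Real.logb 2 N⌉₊ + (⌊C₁ * Real.logb 2 N⌋₊ + 1)) *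
      ((2 : ℝ≥0∞) ^ (⌈(1+ε) * Real.logb 2 N⌉₊ * ⌊C₁ * Real.logb 2 N⌋₊))⁻¹ := by
  classical
  set L : ℝ := Real.logb 2 N with hL
  set t : ℕ := ⌈(1+ε) * L⌉₊ with htdef
  set m' : ℕ := ⌊C₁ * L⌋₊ with hmdef
  -- inclusion in a union of basic cell events
  have hsub : {A : Fin N → Fin N → Bool | ∃ (T : Finset (Fin N)) (s : Fin N → Bool),
        (1 + ε) * Real.logb 2 N ≤ (T.card : ℝ) ∧
        C₁ * Real.logb 2 N <
          ((Finset.univ.filter fun j => ∀ i ∈ T, A i j = s i).card : ℝ)} ⊆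
      ⋃ T ∈ Finset.powersetCard t (Finset.univ : Finset (Fin N)),
        ⋃ j₀ ∈ (Finset.univ : Finset (Fin N)),
          ⋃ S' ∈ Finset.powersetCard m' (Finset.univ.erase j₀),
            {A : Fin N → Fin N → Bool | ∀ j ∈ S', ∀ i ∈ T, A i j = A i j₀} := by
    rintro A ⟨T₀, s, hT₀, hcell⟩
    have ht0 : t ≤ T₀.card := Nat.ceil_le.2 hT₀
    obtain ⟨T, hTsub, hTcard⟩ := Finset.exists_subset_card_eq ht0
    have hcellsub : (Finset.univ.filter fun j => ∀ i ∈ T₀, A i j = s i) ⊆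
        (Finset.univ.filter fun j => ∀ i ∈ T, A i j = s i) := by
      intro j hj
      rw [Finset.mem_filter] at hj ⊢
      exact ⟨Finset.mem_univ _, fun i hi => hj.2 i (hTsub hi)⟩
    have hm0 : m' + 1 ≤ (Finset.univ.filter fun j => ∀ i ∈ T, A i j = s i).card := by
      have h1 : C₁ * L < ((Finset.univ.filter fun j => ∀ i ∈ T, A i j = s i).card : ℝ) :=
        lt_of_lt_of_le hcell (by exact_mod_cast Finset.card_le_card hcellsub)
      have hL0 : 0 ≤ C₁ * L := mul_nonneg hC₁ (Real.logb_nonneg one_lt_two (by exact_mod_cast hN))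
      have := (Nat.floor_lt hL0).2 h1
      omega
    obtain ⟨S, hSsub, hScard⟩ := Finset.exists_subset_card_eq hm0
    have hSne : S.Nonempty := Finset.card_pos.1 (by omega)
    set j₀ : Fin N := S.min' hSne with hj₀def
    have hj₀S : j₀ ∈ S := S.min'_mem hSne
    have hmatch : ∀ j ∈ S, ∀ i ∈ T, A i j = s i := by
      intro j hj i hi
      exact (Finset.mem_filter.1 (hSsub hj)).2 i hi
    simp only [Set.mem_iUnion]
    refine ⟨T, ?_, j₀, Finset.mem_univ _, S.erase j₀, ?_, ?_⟩
    · simp [Finset.mem_powersetCard, hTcard]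
    · simp only [Finset.mem_powersetCard]
      constructor
      · intro x hx
        simp only [Finset.mem_erase] at hx ⊢
        exact ⟨hx.1, Finset.mem_univ _⟩
      · rw [Finset.card_erase_of_mem hj₀S, hScard]
        omega
    · intro j hj i hi
      rw [hmatch j (Finset.mem_of_mem_erase hj) i hi, hmatch j₀ hj₀S i hi]
  refine (measure_mono hsub).trans ?_
  refine (measure_biUnion_finset_le _ _).trans ?_
  have hstep : ∀ T ∈ Finset.powersetCard t (Finset.univ : Finset (Fin N)),
      (PMF.uniformOfFintype (Fin N → Fin N → Bool)).toMeasure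
        (⋃ j₀ ∈ (Finset.univ : Finset (Fin N)),
          ⋃ S' ∈ Finset.powersetCard m' (Finset.univ.erase j₀),
            {A : Fin N → Fin N → Bool | ∀ j ∈ S', ∀ i ∈ T, A i j = A i j₀})
      ≤ (N : ℝ≥0∞) * ((N : ℝ≥0∞) ^ m' * ((2 : ℝ≥0∞) ^ (t * m'))⁻¹) := by
    intro T hT
    have hTcard : T.card = t := (Finset.mem_powersetCard.1 hT).2
    refine (measure_biUnion_finset_le _ _).trans ?_
    have hstep2 : ∀ j₀ ∈ (Finset.univ : Finset (Fin N)),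
        (PMF.uniformOfFintype (Fin N → Fin N → Bool)).toMeasure
          (⋃ S' ∈ Finset.powersetCard m' (Finset.univ.erase j₀),
            {A : Fin N → Fin N → Bool | ∀ j ∈ S', ∀ i ∈ T, A i j = A i j₀})
        ≤ (N : ℝ≥0∞) ^ m' * ((2 : ℝ≥0∞) ^ (t * m'))⁻¹ := by
      intro j₀ _
      refine (measure_biUnion_finset_le _ _).trans ?_
      have hterm : ∀ S' ∈ Finset.powersetCard m' ((Finset.univ : Finset (Fin N)).erase j₀),
          (PMF.uniformOfFintype (Fin N → Fin N → Bool)).toMeasure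
            {A : Fin N → Fin N → Bool | ∀ j ∈ S', ∀ i ∈ T, A i j = A i j₀}
          ≤ ((2 : ℝ≥0∞) ^ (t * m'))⁻¹ := by
        intro S' hS'
        obtain ⟨hS'sub, hS'card⟩ := Finset.mem_powersetCard.1 hS'
        have hj₀ : j₀ ∉ S' := fun h => (Finset.mem_erase.1 (hS'sub h)).1 rfl
        rw [cell_measure T S' j₀ hj₀, hTcard, hS'card]
      refine (Finset.sum_le_sum hterm).trans ?_
      rw [Finset.sum_const, Finset.card_powersetCard, nsmul_eq_mul]
      refine mul_le_mul_left ?_ _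
      have h1 : ((Finset.univ : Finset (Fin N)).erase j₀).card.choose m' ≤ N ^ m' :=
        (Nat.choose_le_pow _ _).trans (Nat.pow_le_pow_left (by
          simp [Finset.card_erase_of_mem]) _)
      exact_mod_cast Nat.cast_le.2 h1
    refine (Finset.sum_le_sum hstep2).trans ?_
    rw [Finset.sum_const, Finset.card_univ, Fintype.card_fin, nsmul_eq_mul]
  refine (Finset.sum_le_sum hstep).trans ?_
  rw [Finset.sum_const, Finset.card_powersetCard, Finset.card_univ, Fintype.card_fin,
    nsmul_eq_mul]
  have h1 : (N.choose t : ℝ≥0∞) ≤ (N : ℝ≥0∞) ^ t := by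
    exact_mod_cast Nat.cast_le.2 (Nat.choose_le_pow N t)
  calc (N.choose t : ℝ≥0∞) * ((N : ℝ≥0∞) * ((N : ℝ≥0∞) ^ m' * ((2:ℝ≥0∞) ^ (t * m'))⁻¹))
      ≤ (N : ℝ≥0∞) ^ t * ((N : ℝ≥0∞) * ((N : ℝ≥0∞) ^ m' * ((2:ℝ≥0∞) ^ (t * m'))⁻¹)) :=
        mul_le_mul_left h1 _
    _ = (N : ℝ≥0∞) ^ (t + (m' + 1)) * ((2:ℝ≥0∞) ^ (t * m'))⁻¹ := by ring

-- analytic limit lemma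
lemma bound_tendsto (ε : ℝ) (hε : 0 < ε) :
    Tendsto (fun N : ℕ => ENNReal.ofReal
      ((2:ℝ) ^ (-(Real.logb 2 N)^2 + (3+ε) * Real.logb 2 N))) atTop (nhds 0) := by
  have hlog : Tendsto (fun N : ℕ => Real.logb 2 (N : ℝ)) atTop atTop :=
    (Real.tendsto_logb_atTop (by norm_num)).comp tendsto_natCast_atTop_atTop
  have hpoly : Tendsto (fun x : ℝ => -x^2 + (3+ε) * x) atTop atBot := by
    have h1 : Tendsto (fun x : ℝ => -x) atTop atBot := tendsto_neg_atTop_atBot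
    refine tendsto_atBot_mono' atTop ?_ h1
    filter_upwards [eventually_ge_atTop (4+ε)] with x hx
    nlinarith
  have hf : Tendsto (fun N : ℕ => -(Real.logb 2 N)^2 + (3+ε) * Real.logb 2 N)
      atTop atBot := hpoly.comp hlog
  have h2 : Tendsto (fun y : ℝ => (2:ℝ) ^ y) atBot (nhds 0) := by
    have : (fun y : ℝ => (2:ℝ) ^ y) = fun y => Real.exp (Real.log 2 * y) := by
      funext y; rw [Real.rpow_def_of_pos (by norm_num)]
    rw [this]
    refine Real.tendsto_exp_atBot.comp ?_
    exact (tendsto_const_mul_atBot_of_pos (Real.log_pos (by norm_num))).2 tendsto_id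
  have := (ENNReal.continuous_ofReal.tendsto 0).comp (h2.comp hf)
  rw [ENNReal.ofReal_zero] at this
  exact this

lemma exponent_ineq (ε C₁ L : ℝ) (hε : 0 < ε) (hεC₁ : ε * C₁ = 2 + 2*ε) (hC₁ : 2 ≤ C₁)
    (hL1 : 1 ≤ L) (t m' : ℕ)
    (htl : (1+ε) * L ≤ (t:ℝ)) (htu : (t:ℝ) ≤ (1+ε) * L + 1)
    (hml : C₁ * L - 1 ≤ (m':ℝ)) (hmu : (m':ℝ) ≤ C₁ * L) :
    L * ((t:ℝ) + ((m':ℝ) + 1)) - (t:ℝ) * (m':ℝ) ≤ -(L^2) + (3+ε) * L := by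
  have hL0 : 0 < L := lt_of_lt_of_le one_pos hL1
  have h1 : 0 ≤ C₁ * L - 1 := by nlinarith
  have h2 : (0:ℝ) ≤ (1+ε) * L := by nlinarith
  have hb1 : (1+ε) * L * (C₁ * L - 1) ≤ (t:ℝ) * (m':ℝ) :=
    mul_le_mul htl hml h1 (le_trans h2 htl)
  have hb2 : L * ((t:ℝ) + ((m':ℝ) + 1)) ≤ L * ((1+ε)*L + 1 + (C₁*L + 1)) := by
    have : (t:ℝ) + ((m':ℝ) + 1) ≤ (1+ε)*L + 1 + (C₁*L + 1) := by linarith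
    exact mul_le_mul_of_nonneg_left this hL0.le
  nlinarith [sq_nonneg L, mul_pos hL0 hL0]

lemma ennreal_convert (N t m' : ℕ) (f : ℝ)
    (hreal : (N:ℝ) ^ (t + (m' + 1)) * (((2:ℝ) ^ (t * m'))⁻¹) ≤ (2:ℝ) ^ f) :
    (N : ℝ≥0∞) ^ (t + (m' + 1)) * ((2 : ℝ≥0∞) ^ (t * m'))⁻¹ ≤
      ENNReal.ofReal ((2:ℝ) ^ f) := by
  have e1 : (N : ℝ≥0∞) ^ (t + (m' + 1)) = ENNReal.ofReal ((N:ℝ) ^ (t + (m' + 1))) := by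
    rw [ENNReal.ofReal_pow (Nat.cast_nonneg N), ENNReal.ofReal_natCast]
  have e2 : ((2 : ℝ≥0∞) ^ (t * m'))⁻¹ = ENNReal.ofReal (((2:ℝ) ^ (t * m'))⁻¹) := by
    rw [ENNReal.ofReal_inv_of_pos (by positivity), ENNReal.ofReal_pow (by norm_num)]
    norm_num
  rw [e1, e2, ← ENNReal.ofReal_mul (by positivity)]
  exact ENNReal.ofReal_le_ofReal hreal

lemma real_pow_eq_rpow (N K M : ℕ) (hN : 1 ≤ N) :
    (N:ℝ) ^ K * (((2:ℝ) ^ M)⁻¹) = (2:ℝ) ^ (Real.logb 2 N * K - M) := by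
  have hNpos : (0:ℝ) < N := by exact_mod_cast hN
  calc (N:ℝ) ^ K * (((2:ℝ) ^ M)⁻¹)
      = ((2:ℝ) ^ Real.logb 2 (N:ℝ)) ^ (K:ℝ) * (((2:ℝ) ^ (M:ℝ))⁻¹) := by
        rw [Real.rpow_logb two_pos (by norm_num) hNpos, Real.rpow_natCast,
          Real.rpow_natCast]
    _ = (2:ℝ) ^ (Real.logb 2 (N:ℝ) * K) * (2:ℝ) ^ (-(M:ℝ)) := by
        rw [← Real.rpow_mul (by norm_num), Real.rpow_neg (by norm_num)]
    _ = (2:ℝ) ^ (Real.logb 2 N * K - M) := by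
        rw [← Real.rpow_add (by norm_num : (0:ℝ) < 2)]
        ring_nf

/-- Cells of large sign patterns are small in random matrices: for every
`ε > 0` there is a constant `C₁ > 0` such that for a uniformly random total
sign matrix `A ∈ {-1,1}^{N×N}` (encoded by independent uniform Boolean
entries), the probability that some set `T` of rows with
`|T| ≥ (1+ε)·log₂ N` and some sign assignment `s` on `T` have a cell
`C(T,s) = {j : ∀ i ∈ T, A i j = s i}` of size exceeding `C₁·log₂ N`
tends to `0` as `N → ∞`. -/
theorem random_matrix_cells_small (ε : ℝ) (hε : 0 < ε) : ∃ C₁ : ℝ, 0 < C₁ ∧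
    Filter.Tendsto (fun N : ℕ =>
      (PMF.uniformOfFintype (Fin N → Fin N → Bool)).toMeasure
        {A | ∃ (T : Finset (Fin N)) (s : Fin N → Bool),
          (1 + ε) * Real.logb 2 N ≤ (T.card : ℝ) ∧
          C₁ * Real.logb 2 N <
            ((Finset.univ.filter fun j => ∀ i ∈ T, A i j = s i).card : ℝ)})
      Filter.atTop (nhds 0) := by
  set C₁ : ℝ := (2 + ε) / ε + 1 with hC₁def
  have hC₁pos : 0 < C₁ := by positivity
  have hεC₁ : ε * C₁ = 2 + 2*ε := by
    rw [hC₁def]; field_simp; ring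
  have hC₁2 : 2 ≤ C₁ := by
    have h1 : (1:ℝ) ≤ (2 + ε) / ε := (one_le_div hε).2 (by linarith)
    rw [hC₁def]; linarith
  refine ⟨C₁, hC₁pos, ?_⟩
  refine tendsto_of_tendsto_of_tendsto_of_le_of_le' tendsto_const_nhds (bound_tendsto ε hε)
    (Eventually.of_forall fun N => zero_le) ?_
  filter_upwards [eventually_ge_atTop 2] with N hN2
  have hN1 : 1 ≤ N := by omega
  set L : ℝ := Real.logb 2 N with hLdef
  have hL1 : 1 ≤ L := by
    rw [hLdef, show (1:ℝ) = Real.logb 2 2 from (Real.logb_self_eq_one (by norm_num)).symm]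
    exact Real.logb_le_logb_of_le (by norm_num) (by norm_num) (by exact_mod_cast hN2)
  refine (event_measure_le ε C₁ hε hC₁pos.le N hN1).trans ?_
  set t : ℕ := ⌈(1+ε) * L⌉₊ with htdef
  set m' : ℕ := ⌊C₁ * L⌋₊ with hmdef
  apply ennreal_convert
  rw [real_pow_eq_rpow N (t + (m' + 1)) (t * m') hN1]
  apply Real.rpow_le_rpow_of_exponent_le one_le_two
  have h0t : (0:ℝ) ≤ (1+ε) * L := by nlinarith
  have h0m : (0:ℝ) ≤ C₁ * L := by nlinarith
  have htl : (1+ε) * L ≤ (t:ℝ) := Nat.le_ceil _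
  have htu : (t:ℝ) ≤ (1+ε) * L + 1 := (Nat.ceil_lt_add_one h0t).le
  have hml : C₁ * L - 1 ≤ (m':ℝ) := by
    have := Nat.lt_floor_add_one (C₁ * L); linarith
  have hmu : (m':ℝ) ≤ C₁ * L := Nat.floor_le h0m
  have key := exponent_ineq ε C₁ L hε hεC₁ hC₁2 hL1 t m' htl htu hml hmu
  push_cast
  linarith
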